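/- Let d ≥ 2 and β > d/2, and fix ε > 0 sufficiently small depending on β. Then sup_{W∈ℝ^d} ∫_{S^{d-1}} ⟨W^⊥⟩^{1−2β} ⟨W^∥⟩^{d−2+ε} dω < ∞ and sup_{W∈ℝ^d} ∫_{S^{d-1}} ⟨W^⊥⟩^{ε} ⟨W^∥⟩^{d−1−2β} dω < ∞, where W^∥ = (ω·W)ω and W^⊥ = W − W^∥. -/

import Mathlib

open MeasureTheory Real
open scoped ENNReal RealInnerProductSpace

noncomputable section

abbrev Ed (d : ℕ) : Type := EuclideanSpace ℝ (Fin d)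

def jap {d : ℕ} (y : Ed d) : ℝ := Real.sqrt (1 + ‖y‖ ^ 2)

/-- `W^∥ = (ω·W)ω`. -/
def par {d : ℕ} (ω W : Ed d) : Ed d := (⟪ω, W⟫ : ℝ) • ω

/-- `W^⊥ = W − W^∥`. -/
def perp {d : ℕ} (ω W : Ed d) : Ed d := W - par ω W

open Set
open scoped NNReal

namespace Stmt13Aux

/-- elementary sqrt Lipschitz bound -/
lemma abs_sqrt_sub_sqrt_le {a b c : ℝ} (hc : 0 < c) (ha : c ≤ a) (hb : c ≤ b) :
    |Real.sqrt a - Real.sqrt b| ≤ |a - b| / Real.sqrt c := by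
  have h0a : 0 ≤ a := hc.le.trans ha
  have h0b : 0 ≤ b := hc.le.trans hb
  have hsc : 0 < Real.sqrt c := Real.sqrt_pos.mpr hc
  rw [le_div_iff₀ hsc]
  have h1 : Real.sqrt c ≤ Real.sqrt a + Real.sqrt b :=
    le_trans (Real.sqrt_le_sqrt ha) (le_add_of_nonneg_right (Real.sqrt_nonneg b))
  calc |Real.sqrt a - Real.sqrt b| * Real.sqrt c
      ≤ |Real.sqrt a - Real.sqrt b| * (Real.sqrt a + Real.sqrt b) := by
        exact mul_le_mul_of_nonneg_left h1 (abs_nonneg _)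
    _ = |(Real.sqrt a - Real.sqrt b) * (Real.sqrt a + Real.sqrt b)| := by
        rw [abs_mul,
          abs_of_nonneg (add_nonneg (Real.sqrt_nonneg a) (Real.sqrt_nonneg b))]
    _ = |a - b| := by
        have ha2 : Real.sqrt a ^ 2 = a := Real.sq_sqrt h0a
        have hb2 : Real.sqrt b ^ 2 = b := Real.sq_sqrt h0b
        have : (Real.sqrt a - Real.sqrt b) * (Real.sqrt a + Real.sqrt b) = a - b := by
          nlinarith [ha2, hb2]
        rw [this]

variable {d : ℕ}

lemma sum_sq_eq_one {x : Ed d} (hx : ‖x‖ = 1) : ∑ j, (x j) ^ 2 = 1 := by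
  rw [EuclideanSpace.norm_eq] at hx
  have := Real.sqrt_eq_one.mp (by simpa using hx)
  simpa [Real.norm_eq_abs, sq_abs] using this

lemma sum_sq_compl (i : Fin d) (x : Ed d) :
    ∑ j : {j : Fin d // j ≠ i}, (x j.1) ^ 2 = (∑ j, (x j) ^ 2) - (x i) ^ 2 := by
  classical
  rw [← Finset.sum_subtype (Finset.univ.erase i)
    (fun j => by simp [Finset.mem_erase]) (fun j => (x j) ^ 2)]
  exact Finset.sum_erase_eq_sub (Finset.mem_univ i)

lemma coord_sq_le_sum {x : Ed d} (j : Fin d) : (x j) ^ 2 ≤ ∑ k, (x k) ^ 2 :=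
  Finset.single_le_sum (fun k _ => sq_nonneg (x k)) (Finset.mem_univ j)

def projC (i : Fin d) (x : Ed d) : {j : Fin d // j ≠ i} → ℝ := fun j => x j.1

/-- the Lipschitz/Hausdorff constant for charts -/
def Kc (d : ℕ) : ℝ≥0∞ := ((2 * (d : ℝ≥0) ^ 2 : ℝ≥0) : ℝ≥0∞) ^ ((d : ℝ) - 1)

lemma Kc_ne_top (hd : 1 ≤ d) : Kc d ≠ ⊤ := by
  apply ENNReal.rpow_ne_top_of_nonneg
  · have : (1:ℝ) ≤ (d:ℝ) := by exact_mod_cast hd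
    linarith
  · exact ENNReal.coe_ne_top

lemma chart_bound (hd : 1 ≤ d) (i : Fin d) (σ : ℝ) (hσ : σ = 1 ∨ σ = -1)
    (A : Set (Ed d))
    (hA : ∀ ω ∈ A, ‖ω‖ = 1 ∧ (d : ℝ)⁻¹ ≤ (ω i) ^ 2 ∧ 0 ≤ σ * ω i) :
    μH[(d : ℝ) - 1] A ≤ Kc d * volume (projC i '' A) := by
  classical
  have hdR : (1:ℝ) ≤ (d:ℝ) := by exact_mod_cast hd
  have hdpos : (0:ℝ) < d := by linarith
  set Sf : ({j : Fin d // j ≠ i} → ℝ) → ℝ := fun x => ∑ j, (x j) ^ 2 with hSf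
  set φ : ({j : Fin d // j ≠ i} → ℝ) → Ed d := fun x =>
    (WithLp.equiv 2 (∀ _ : Fin d, ℝ)).symm
      (fun j => if h : j = i then σ * Real.sqrt (1 - Sf x) else x ⟨j, h⟩) with hφ
  set D : Set ({j : Fin d // j ≠ i} → ℝ) := {x | Sf x ≤ 1 - (d : ℝ)⁻¹} with hD
  have hφcoord : ∀ x j, φ x j =
      if h : j = i then σ * Real.sqrt (1 - Sf x) else x ⟨j, h⟩ := by
    intro x j; rfl
  -- projections of A lie in D
  have hSA : ∀ ω ∈ A, Sf (projC i ω) = 1 - (ω i) ^ 2 := by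
    intro ω hω
    have h1 := sum_sq_eq_one (hA ω hω).1
    simp only [hSf, projC]
    rw [sum_sq_compl i ω, h1]
  have himg : projC i '' A ⊆ D := by
    rintro - ⟨ω, hω, rfl⟩
    have := (hA ω hω).2.1
    simp only [hD, mem_setOf_eq, hSA ω hω]
    linarith
  -- φ inverts projC on A
  have hinv : ∀ ω ∈ A, φ (projC i ω) = ω := by
    intro ω hω
    obtain ⟨hn, hsq, hsgn⟩ := hA ω hω
    ext j
    rw [hφcoord]
    by_cases h : j = i
    · subst h
      rw [dif_pos rfl, hSA ω hω]
      have : 1 - (1 - (ω j) ^ 2) = (ω j) ^ 2 := by ring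
      rw [this, Real.sqrt_sq_eq_abs]
      rcases hσ with h1 | h1 <;> subst h1
      · simp only [one_mul] at hsgn ⊢; exact abs_of_nonneg hsgn
      · simp only [neg_one_mul] at hsgn ⊢
        rw [abs_of_nonpos (by linarith), neg_neg]
    · rw [dif_neg h]; rfl
  have hAeq : A = φ '' (projC i '' A) := by
    ext ω
    constructor
    · intro hω; exact ⟨projC i ω, ⟨ω, hω, rfl⟩, hinv ω hω⟩
    · rintro ⟨-, ⟨ω', hω', rfl⟩, rfl⟩; rwa [hinv ω' hω']
  -- Lipschitz bound
  have hlip : LipschitzOnWith (2 * (d : ℝ≥0) ^ 2) φ D := by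
    rw [lipschitzOnWith_iff_dist_le_mul]
    intro x hx y hy
    have hxD : Sf x ≤ 1 - (d:ℝ)⁻¹ := hx
    have hyD : Sf y ≤ 1 - (d:ℝ)⁻¹ := hy
    have hd0 : (0:ℝ) < (d:ℝ)⁻¹ := by positivity
    have hSfnn : ∀ z : {j : Fin d // j ≠ i} → ℝ, 0 ≤ Sf z := fun z =>
      Finset.sum_nonneg fun j _ => sq_nonneg _
    have hcoordx : ∀ j, |x j| ≤ 1 := by
      intro j
      have h1 : (x j)^2 ≤ Sf x :=
        Finset.single_le_sum (fun k _ => sq_nonneg (x k)) (Finset.mem_univ j)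
      have : (x j)^2 ≤ 1 := by linarith
      calc |x j| = Real.sqrt ((x j)^2) := (Real.sqrt_sq_eq_abs _).symm
        _ ≤ Real.sqrt 1 := Real.sqrt_le_sqrt this
        _ = 1 := Real.sqrt_one
    have hcoordy : ∀ j, |y j| ≤ 1 := by
      intro j
      have h1 : (y j)^2 ≤ Sf y :=
        Finset.single_le_sum (fun k _ => sq_nonneg (y k)) (Finset.mem_univ j)
      have : (y j)^2 ≤ 1 := by linarith
      calc |y j| = Real.sqrt ((y j)^2) := (Real.sqrt_sq_eq_abs _).symm
        _ ≤ Real.sqrt 1 := Real.sqrt_le_sqrt this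
        _ = 1 := Real.sqrt_one
    set D0 := dist x y with hD0
    have hD0nn : 0 ≤ D0 := dist_nonneg
    -- difference of the sums
    have hSdiff : |Sf x - Sf y| ≤ 2 * d * D0 := by
      have h1 : |Sf x - Sf y| ≤ ∑ j, |(x j)^2 - (y j)^2| := by
        rw [hSf, ← Finset.sum_sub_distrib]
        exact Finset.abs_sum_le_sum_abs _ _
      have h2 : ∀ j : {j : Fin d // j ≠ i}, |(x j)^2 - (y j)^2| ≤ 2 * D0 := by
        intro j
        have : (x j)^2 - (y j)^2 = (x j - y j) * (x j + y j) := by ring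
        rw [this, abs_mul]
        have hj : |x j - y j| ≤ D0 := by
          have := dist_le_pi_dist x y j
          rwa [Real.dist_eq] at this
        have hj2 : |x j + y j| ≤ 2 := by
          calc |x j + y j| ≤ |x j| + |y j| := abs_add_le _ _
            _ ≤ 2 := by linarith [hcoordx j, hcoordy j]
        calc |x j - y j| * |x j + y j| ≤ D0 * 2 :=
              mul_le_mul hj hj2 (abs_nonneg _) hD0nn
          _ = 2 * D0 := by ring
      have h3 : ∑ j, |(x j)^2 - (y j)^2| ≤ (Fintype.card {j : Fin d // j ≠ i}) * (2 * D0) := by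
        calc ∑ j, |(x j)^2 - (y j)^2| ≤ ∑ _j : {j : Fin d // j ≠ i}, 2 * D0 :=
              Finset.sum_le_sum (fun j _ => h2 j)
          _ = (Fintype.card {j : Fin d // j ≠ i}) * (2 * D0) := by
              rw [Finset.sum_const, Finset.card_univ, nsmul_eq_mul]
      have hcard : (Fintype.card {j : Fin d // j ≠ i} : ℝ) ≤ d := by
        have : Fintype.card {j : Fin d // j ≠ i} ≤ Fintype.card (Fin d) :=
          Fintype.card_subtype_le _
        rw [Fintype.card_fin] at this
        exact_mod_cast this
      calc |Sf x - Sf y| ≤ (Fintype.card {j : Fin d // j ≠ i}) * (2 * D0) := h1.trans h3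
        _ ≤ d * (2 * D0) := by
            apply mul_le_mul_of_nonneg_right hcard (by linarith)
        _ = 2 * d * D0 := by ring
    -- coordinatewise bound
    have hcoord : ∀ j : Fin d, dist (φ x j) (φ y j) ≤ 2 * d * Real.sqrt d * D0 := by
      intro j
      have hds : (1:ℝ) ≤ Real.sqrt d := by
        rw [show (1:ℝ) = Real.sqrt 1 by rw [Real.sqrt_one]]
        exact Real.sqrt_le_sqrt hdR
      by_cases h : j = i
      · subst h
        rw [hφcoord, hφcoord, dif_pos rfl, dif_pos rfl, Real.dist_eq]
        have habs : |σ| = 1 := by rcases hσ with h1 | h1 <;> simp [h1]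
        have : σ * Real.sqrt (1 - Sf x) - σ * Real.sqrt (1 - Sf y)
            = σ * (Real.sqrt (1 - Sf x) - Real.sqrt (1 - Sf y)) := by ring
        rw [this, abs_mul, habs, one_mul]
        have hax : (d:ℝ)⁻¹ ≤ 1 - Sf x := by linarith
        have hay : (d:ℝ)⁻¹ ≤ 1 - Sf y := by linarith
        have h1 := abs_sqrt_sub_sqrt_le hd0 hax hay
        have h2 : |(1 - Sf x) - (1 - Sf y)| = |Sf x - Sf y| := by
          rw [show (1 - Sf x) - (1 - Sf y) = -(Sf x - Sf y) by ring, abs_neg]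
        rw [h2] at h1
        have hsqc : Real.sqrt ((d:ℝ)⁻¹) = (Real.sqrt d)⁻¹ := Real.sqrt_inv d
        rw [hsqc] at h1
        have hsd : 0 < Real.sqrt d := by linarith
        calc |Real.sqrt (1 - Sf x) - Real.sqrt (1 - Sf y)|
            ≤ |Sf x - Sf y| / (Real.sqrt d)⁻¹ := h1
          _ = Real.sqrt d * |Sf x - Sf y| := by
              field_simp
          _ ≤ Real.sqrt d * (2 * d * D0) := by
              apply mul_le_mul_of_nonneg_left hSdiff hsd.le
          _ = 2 * d * Real.sqrt d * D0 := by ring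
      · rw [hφcoord, hφcoord, dif_neg h, dif_neg h, Real.dist_eq]
        have hj : |x ⟨j, h⟩ - y ⟨j, h⟩| ≤ D0 := by
          have := dist_le_pi_dist x y ⟨j, h⟩
          rwa [Real.dist_eq] at this
        calc |x ⟨j, h⟩ - y ⟨j, h⟩| ≤ D0 := hj
          _ ≤ 2 * d * Real.sqrt d * D0 := by
              nlinarith [hD0nn, hds, hdR, mul_le_mul_of_nonneg_left hds hD0nn]
    -- sum up
    have : dist (φ x) (φ y) ≤ 2 * (d:ℝ)^2 * D0 := by
      rw [EuclideanSpace.dist_eq]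
      have hterm : ∀ j : Fin d, dist (φ x j) (φ y j) ^ 2 ≤ (2 * d * Real.sqrt d * D0)^2 := by
        intro j
        have h0 : 0 ≤ dist (φ x j) (φ y j) := dist_nonneg
        exact pow_le_pow_left₀ h0 (hcoord j) 2
      calc Real.sqrt (∑ j, dist (φ x j) (φ y j) ^ 2)
          ≤ Real.sqrt (∑ _j : Fin d, (2 * d * Real.sqrt d * D0)^2) :=
            Real.sqrt_le_sqrt (Finset.sum_le_sum fun j _ => hterm j)
        _ = Real.sqrt (d * (2 * d * Real.sqrt d * D0)^2) := by
            rw [Finset.sum_const, Finset.card_univ, Fintype.card_fin, nsmul_eq_mul]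
        _ = Real.sqrt d * (2 * d * Real.sqrt d * D0) := by
            rw [Real.sqrt_mul (by positivity), Real.sqrt_sq (by positivity)]
        _ = 2 * d * (Real.sqrt d * Real.sqrt d) * D0 := by ring
        _ = 2 * (d:ℝ)^2 * D0 := by
            rw [Real.mul_self_sqrt hdpos.le]; ring
    calc dist (φ x) (φ y) ≤ 2 * (d:ℝ)^2 * D0 := this
      _ = ((2 * (d:ℝ≥0)^2 : ℝ≥0) : ℝ) * dist x y := by push_cast; ring
  -- put everything together
  have hcast : ((d:ℝ) - 1) = ((d - 1 : ℕ) : ℝ) := by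
    rw [Nat.cast_sub hd, Nat.cast_one]
  have hcard : Fintype.card {j : Fin d // j ≠ i} = d - 1 := by
    rw [Fintype.card_subtype_compl, Fintype.card_fin, Fintype.card_subtype_eq]
  calc μH[(d : ℝ) - 1] A = μH[(d : ℝ) - 1] (φ '' (projC i '' A)) := by rw [← hAeq]
    _ ≤ ((2 * (d : ℝ≥0) ^ 2 : ℝ≥0) : ℝ≥0∞) ^ ((d:ℝ)-1) * μH[(d : ℝ) - 1] (projC i '' A) :=
        (hlip.mono himg).hausdorffMeasure_image_le (by linarith)
    _ = Kc d * volume (projC i '' A) := by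
        rw [Kc]
        congr 1
        rw [hcast, ← hcard]
        rw [hausdorffMeasure_pi_real]

lemma exists_big_coord (hd : 1 ≤ d) {x : Ed d} (hx : ‖x‖ = 1) :
    ∃ i, (d : ℝ)⁻¹ ≤ (x i) ^ 2 := by
  by_contra h
  push_neg at h
  have hne : (Finset.univ : Finset (Fin d)).Nonempty := by
    rw [Finset.univ_nonempty_iff]
    exact Fin.pos_iff_nonempty.mp (by omega)
  have hlt : ∑ i, (x i) ^ 2 < ∑ _i : Fin d, (d : ℝ)⁻¹ :=
    Finset.sum_lt_sum_of_nonempty hne (fun i _ => h i)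
  rw [sum_sq_eq_one hx, Finset.sum_const, Finset.card_univ, Fintype.card_fin,
    nsmul_eq_mul] at hlt
  have hdne : (d : ℝ) ≠ 0 := by
    have : (1:ℝ) ≤ (d:ℝ) := by exact_mod_cast hd
    linarith
  rw [mul_inv_cancel₀ hdne] at hlt
  exact lt_irrefl 1 hlt

lemma chart_est (hd : 1 ≤ d) (i : Fin d) (σ : ℝ) (hσ : σ = 1 ∨ σ = -1)
    (A : Set (Ed d))
    (hA : ∀ ω ∈ A, ‖ω‖ = 1 ∧ (d : ℝ)⁻¹ ≤ (ω i) ^ 2 ∧ 0 ≤ σ * ω i)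
    (c : {j : Fin d // j ≠ i} → ℝ) (hc : ∀ j, 0 ≤ c j)
    (hbox : ∀ ω ∈ A, ∀ j : {j : Fin d // j ≠ i}, |ω j.1| ≤ c j) :
    μH[(d : ℝ) - 1] A ≤ Kc d * ∏ j, ENNReal.ofReal (2 * c j) := by
  refine (chart_bound hd i σ hσ A hA).trans (mul_le_mul_right ?_ _)
  have hsub : projC i '' A ⊆ Set.univ.pi (fun j => Icc (-(c j)) (c j)) := by
    rintro - ⟨ω, hω, rfl⟩
    intro j _
    have := abs_le.mp (hbox ω hω j)
    exact ⟨this.1, this.2⟩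
  refine (measure_mono hsub).trans (le_of_eq ?_)
  rw [volume_pi_pi]
  refine Finset.prod_congr rfl fun j _ => ?_
  rw [Real.volume_Icc]
  congr 1
  ring

lemma sphere_est (hd : 1 ≤ d) (A : Set (Ed d)) (hA : ∀ x ∈ A, ‖x‖ = 1)
    (bigC : ℝ≥0∞)
    (hper : ∀ (i : Fin d) (σ : ℝ), (σ = 1 ∨ σ = -1) →
      μH[(d : ℝ) - 1] {x | x ∈ A ∧ ((d : ℝ)⁻¹ ≤ (x i) ^ 2 ∧ 0 ≤ σ * x i)} ≤ bigC) :
    μH[(d : ℝ) - 1] A ≤ 2 * d * bigC := by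
  have hcov : A ⊆ ⋃ i : Fin d,
      ({x | x ∈ A ∧ ((d : ℝ)⁻¹ ≤ (x i) ^ 2 ∧ 0 ≤ (1:ℝ) * x i)} ∪
       {x | x ∈ A ∧ ((d : ℝ)⁻¹ ≤ (x i) ^ 2 ∧ 0 ≤ (-1:ℝ) * x i)}) := by
    intro x hx
    obtain ⟨i, hi⟩ := exists_big_coord hd (hA x hx)
    refine mem_iUnion.mpr ⟨i, ?_⟩
    rcases le_total 0 (x i) with h | h
    · left; exact ⟨hx, hi, by linarith⟩
    · right; exact ⟨hx, hi, by linarith⟩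
  calc μH[(d : ℝ) - 1] A ≤ μH[(d : ℝ) - 1] (⋃ i : Fin d,
      ({x | x ∈ A ∧ ((d : ℝ)⁻¹ ≤ (x i) ^ 2 ∧ 0 ≤ (1:ℝ) * x i)} ∪
       {x | x ∈ A ∧ ((d : ℝ)⁻¹ ≤ (x i) ^ 2 ∧ 0 ≤ (-1:ℝ) * x i)})) := measure_mono hcov
    _ ≤ ∑' i : Fin d, μH[(d : ℝ) - 1]
      ({x | x ∈ A ∧ ((d : ℝ)⁻¹ ≤ (x i) ^ 2 ∧ 0 ≤ (1:ℝ) * x i)} ∪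
       {x | x ∈ A ∧ ((d : ℝ)⁻¹ ≤ (x i) ^ 2 ∧ 0 ≤ (-1:ℝ) * x i)}) := measure_iUnion_le _
    _ ≤ ∑' _i : Fin d, (2 * bigC) := by
        refine ENNReal.tsum_le_tsum fun i => (measure_union_le _ _).trans ?_
        rw [two_mul]
        exact add_le_add (hper i 1 (Or.inl rfl)) (hper i (-1) (Or.inr rfl))
    _ = (d : ℝ≥0∞) * (2 * bigC) := by
        rw [tsum_fintype, Finset.sum_const, Finset.card_univ, Fintype.card_fin, nsmul_eq_mul]
    _ = 2 * d * bigC := by ring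

def CS (d : ℕ) : ℝ≥0∞ := 2 * d * (Kc d * 2 ^ d)

lemma CS_ne_top (hd : 1 ≤ d) : CS d ≠ ⊤ := by
  refine ENNReal.mul_ne_top (ENNReal.mul_ne_top ?_ (ENNReal.natCast_ne_top d))
    (ENNReal.mul_ne_top (Kc_ne_top hd) ?_)
  · simp
  · exact ENNReal.pow_ne_top (by simp)

lemma prod_ofReal_two_le (i : Fin d) :
    (∏ _j : {j : Fin d // j ≠ i}, ENNReal.ofReal 2) ≤ 2 ^ d := by
  rw [Finset.prod_const, Finset.card_univ]
  have h2 : (ENNReal.ofReal 2) = 2 := by norm_num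
  rw [h2]
  exact pow_le_pow_right₀ one_le_two
    ((Fintype.card_subtype_le _).trans (le_of_eq (Fintype.card_fin d)))

lemma sphere_meas (hd : 1 ≤ d) : μH[(d : ℝ) - 1] {x : Ed d | ‖x‖ = 1} ≤ CS d := by
  refine sphere_est hd _ (fun x hx => hx) _ (fun i σ hσ => ?_)
  have h := chart_est hd i σ hσ {x | x ∈ {x : Ed d | ‖x‖ = 1} ∧
      ((d : ℝ)⁻¹ ≤ (x i) ^ 2 ∧ 0 ≤ σ * x i)}
    (fun x hx => ⟨hx.1, hx.2⟩) (fun _ => (1:ℝ)) (fun _ => zero_le_one) ?_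
  · refine h.trans ?_
    refine mul_le_mul_right ?_ _
    have : ∀ j : {j : Fin d // j ≠ i}, ENNReal.ofReal (2 * (1:ℝ)) = ENNReal.ofReal 2 := by
      intro j; norm_num
    rw [Finset.prod_congr rfl (fun j _ => this j)]
    exact prod_ofReal_two_le i
  · intro ω hω j
    have h1 : (ω j.1) ^ 2 ≤ 1 := by
      have := coord_sq_le_sum (x := ω) j.1
      rwa [sum_sq_eq_one hω.1] at this
    calc |ω j.1| = Real.sqrt ((ω j.1) ^ 2) := (Real.sqrt_sq_eq_abs _).symm
      _ ≤ Real.sqrt 1 := Real.sqrt_le_sqrt h1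
      _ = 1 := Real.sqrt_one

def CBc (d : ℕ) : ℝ≥0∞ := CS d * ENNReal.ofReal (Real.sqrt d)

lemma CBc_ne_top (hd : 1 ≤ d) : CBc d ≠ ⊤ :=
  ENNReal.mul_ne_top (CS_ne_top hd) ENNReal.ofReal_ne_top

lemma one_le_ofReal_sqrt (hd : 1 ≤ d) : 1 ≤ ENNReal.ofReal (Real.sqrt d) := by
  rw [show (1 : ℝ≥0∞) = ENNReal.ofReal 1 by simp]
  apply ENNReal.ofReal_le_ofReal
  rw [show (1:ℝ) = Real.sqrt 1 by rw [Real.sqrt_one]]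
  exact Real.sqrt_le_sqrt (by exact_mod_cast hd)

lemma capB0 (hd2 : 2 ≤ d) (i₀ : Fin d) {t : ℝ} (ht0 : 0 < t) (ht1 : t ≤ 1) :
    μH[(d : ℝ) - 1] {x : Ed d | ‖x‖ = 1 ∧ |x i₀| ≤ t} ≤ CBc d * ENNReal.ofReal t := by
  have hd : 1 ≤ d := by omega
  have hdR : (1:ℝ) ≤ (d:ℝ) := by exact_mod_cast hd
  rcases le_or_gt (Real.sqrt (d : ℝ)⁻¹) t with hcase | hcase
  · -- big t : use the total sphere measure
    have h1 : μH[(d : ℝ) - 1] {x : Ed d | ‖x‖ = 1 ∧ |x i₀| ≤ t} ≤ CS d :=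
      (measure_mono (fun x hx => hx.1)).trans (sphere_meas hd)
    refine h1.trans ?_
    have h2 : (1 : ℝ≥0∞) ≤ ENNReal.ofReal (Real.sqrt d) * ENNReal.ofReal t := by
      rw [← ENNReal.ofReal_mul (Real.sqrt_nonneg _)]
      rw [show (1 : ℝ≥0∞) = ENNReal.ofReal 1 by simp]
      apply ENNReal.ofReal_le_ofReal
      calc (1:ℝ) = Real.sqrt d * Real.sqrt (d:ℝ)⁻¹ := by
            rw [← Real.sqrt_mul (by linarith), mul_inv_cancel₀ (by linarith), Real.sqrt_one]
        _ ≤ Real.sqrt d * t := by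
            exact mul_le_mul_of_nonneg_left hcase (Real.sqrt_nonneg _)
    calc CS d = CS d * 1 := (mul_one _).symm
      _ ≤ CS d * (ENNReal.ofReal (Real.sqrt d) * ENNReal.ofReal t) :=
          mul_le_mul_right h2 _
      _ = CBc d * ENNReal.ofReal t := by rw [CBc, mul_assoc]
  · -- small t : chart estimates
    have key : μH[(d : ℝ) - 1] {x : Ed d | ‖x‖ = 1 ∧ |x i₀| ≤ t}
        ≤ 2 * d * (Kc d * (2 ^ d * ENNReal.ofReal t)) := by
      refine sphere_est hd _ (fun x hx => hx.1) _ (fun i σ hσ => ?_)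
      by_cases hi : i = i₀
      · subst hi
        have hempty : {x : Ed d | x ∈ {x : Ed d | ‖x‖ = 1 ∧ |x i| ≤ t} ∧
            ((d : ℝ)⁻¹ ≤ (x i) ^ 2 ∧ 0 ≤ σ * x i)} = ∅ := by
          ext x
          simp only [mem_setOf_eq, mem_empty_iff_false, iff_false]
          rintro ⟨⟨-, hxt⟩, hxi, -⟩
          have h1 : |x i| < Real.sqrt (d:ℝ)⁻¹ := lt_of_le_of_lt hxt hcase
          have h2 : Real.sqrt (d:ℝ)⁻¹ ≤ |x i| := by
            rw [← Real.sqrt_sq_eq_abs]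
            exact Real.sqrt_le_sqrt hxi
          linarith
        rw [hempty, measure_empty]
        exact zero_le
      · classical
        set c : {j : Fin d // j ≠ i} → ℝ := fun j => if j.1 = i₀ then t else 1 with hc
        have h := chart_est hd i σ hσ
          {x : Ed d | x ∈ {x : Ed d | ‖x‖ = 1 ∧ |x i₀| ≤ t} ∧
            ((d : ℝ)⁻¹ ≤ (x i) ^ 2 ∧ 0 ≤ σ * x i)}
          (fun x hx => ⟨hx.1.1, hx.2⟩) c
          (fun j => by
            by_cases h : j.1 = i₀
            · simpa [hc, h] using ht0.le
            · simp [hc, h]) ?_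
        · refine h.trans (mul_le_mul_right ?_ _)
          have hsplit : ∀ j : {j : Fin d // j ≠ i},
              ENNReal.ofReal (2 * c j) = ENNReal.ofReal 2 * ENNReal.ofReal (c j) := by
            intro j; rw [ENNReal.ofReal_mul (by norm_num)]
          rw [Finset.prod_congr rfl (fun j _ => hsplit j), Finset.prod_mul_distrib]
          have hone : (∏ j : {j : Fin d // j ≠ i}, ENNReal.ofReal (c j))
              = ENNReal.ofReal t := by
            rw [Finset.prod_eq_single (⟨i₀, Ne.symm hi⟩ : {j : Fin d // j ≠ i})]
            · simp [hc]
            · intro j _ hj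
              have : j.1 ≠ i₀ := by
                intro h'; exact hj (Subtype.ext h')
              simp [hc, this]
            · intro h'; exact absurd (Finset.mem_univ _) h'
          rw [hone]
          exact mul_le_mul_left (prod_ofReal_two_le i) _
        · intro ω hω j
          by_cases h : j.1 = i₀
          · simp only [hc, if_pos h]
            rw [h]; exact hω.1.2
          · simp only [hc, if_neg h]
            have h1 : (ω j.1) ^ 2 ≤ 1 := by
              have := coord_sq_le_sum (x := ω) j.1
              rwa [sum_sq_eq_one hω.1.1] at this
            calc |ω j.1| = Real.sqrt ((ω j.1) ^ 2) := (Real.sqrt_sq_eq_abs _).symm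
              _ ≤ Real.sqrt 1 := Real.sqrt_le_sqrt h1
              _ = 1 := Real.sqrt_one
    refine key.trans ?_
    calc 2 * (d:ℝ≥0∞) * (Kc d * (2 ^ d * ENNReal.ofReal t))
        = CS d * ENNReal.ofReal t := by rw [CS]; ring
      _ ≤ CBc d * ENNReal.ofReal t := by
          refine mul_le_mul_left ?_ _
          rw [CBc]
          exact le_mul_of_one_le_right (zero_le) (one_le_ofReal_sqrt hd)

def CCc (d : ℕ) : ℝ≥0∞ := (CS d + 2 * Kc d) * (2 : ℝ≥0∞) ^ ((d : ℝ) - 1)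

lemma CCc_ne_top (hd : 1 ≤ d) : CCc d ≠ ⊤ := by
  refine ENNReal.mul_ne_top ?_ ?_
  · exact ENNReal.add_ne_top.mpr ⟨CS_ne_top hd,
      ENNReal.mul_ne_top (by simp) (Kc_ne_top hd)⟩
  · refine ENNReal.rpow_ne_top_of_nonneg ?_ (by simp)
    have : (1:ℝ) ≤ (d:ℝ) := by exact_mod_cast hd
    linarith

lemma capC0 (hd2 : 2 ≤ d) (i₀ : Fin d) {t : ℝ} (ht0 : 0 < t) (ht1 : t ≤ 1) :
    μH[(d : ℝ) - 1] {x : Ed d | ‖x‖ = 1 ∧ Real.sqrt (1 - (x i₀) ^ 2) ≤ t}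
      ≤ CCc d * (ENNReal.ofReal t) ^ ((d : ℝ) - 1) := by
  have hd : 1 ≤ d := by omega
  have hdR : (1:ℝ) ≤ (d:ℝ) := by exact_mod_cast hd
  have hdR2 : (2:ℝ) ≤ (d:ℝ) := by exact_mod_cast hd2
  have he0 : (0:ℝ) ≤ (d:ℝ) - 1 := by linarith
  rcases le_or_gt (1/2 : ℝ) t with hcase | hcase
  · -- big t
    have h1 : μH[(d : ℝ) - 1] {x : Ed d | ‖x‖ = 1 ∧ Real.sqrt (1 - (x i₀) ^ 2) ≤ t}
        ≤ CS d := (measure_mono (fun x hx => hx.1)).trans (sphere_meas hd)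
    refine h1.trans ?_
    have h2 : (1 : ℝ≥0∞) ≤ (2:ℝ≥0∞) ^ ((d:ℝ)-1) * (ENNReal.ofReal t) ^ ((d:ℝ)-1) := by
      rw [← ENNReal.mul_rpow_of_nonneg _ _ he0]
      have h3 : (1:ℝ≥0∞) ≤ 2 * ENNReal.ofReal t := by
        have : ENNReal.ofReal (1/2 : ℝ) ≤ ENNReal.ofReal t := ENNReal.ofReal_le_ofReal hcase
        calc (1:ℝ≥0∞) = 2 * ENNReal.ofReal (1/2 : ℝ) := by
              rw [show ((2:ℝ≥0∞)) = ENNReal.ofReal (2:ℝ) by norm_num,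
                ← ENNReal.ofReal_mul (by norm_num)]
              norm_num
          _ ≤ 2 * ENNReal.ofReal t := mul_le_mul_right this _
      calc (1:ℝ≥0∞) = 1 ^ ((d:ℝ)-1) := (ENNReal.one_rpow _).symm
        _ ≤ (2 * ENNReal.ofReal t) ^ ((d:ℝ)-1) := ENNReal.rpow_le_rpow h3 he0
    calc CS d = CS d * 1 := (mul_one _).symm
      _ ≤ CS d * ((2:ℝ≥0∞) ^ ((d:ℝ)-1) * (ENNReal.ofReal t) ^ ((d:ℝ)-1)) :=
          mul_le_mul_right h2 _
      _ = (CS d * (2:ℝ≥0∞) ^ ((d:ℝ)-1)) * (ENNReal.ofReal t) ^ ((d:ℝ)-1) := by ring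
      _ ≤ CCc d * (ENNReal.ofReal t) ^ ((d:ℝ)-1) := by
          refine mul_le_mul_left (mul_le_mul_left ?_ _) _
          exact self_le_add_right _ _
  · -- small t
    set B := {x : Ed d | ‖x‖ = 1 ∧ Real.sqrt (1 - (x i₀) ^ 2) ≤ t} with hB
    have hkey : ∀ x ∈ B, (d:ℝ)⁻¹ ≤ (x i₀) ^ 2 ∧ (∀ j : {j : Fin d // j ≠ i₀}, |x j.1| ≤ t) := by
      intro x hx
      obtain ⟨hx1, hx2⟩ := hx
      have hsq : (x i₀) ^ 2 ≤ 1 := by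
        have := coord_sq_le_sum (x := x) i₀
        rwa [sum_sq_eq_one hx1] at this
      have hnn : (0:ℝ) ≤ 1 - (x i₀) ^ 2 := by linarith
      have ht2 : 1 - (x i₀) ^ 2 ≤ t ^ 2 := by
        have := pow_le_pow_left₀ (Real.sqrt_nonneg _) hx2 2
        rwa [Real.sq_sqrt hnn] at this
      constructor
      · have hinv : (d:ℝ)⁻¹ ≤ 1/2 := by
          rw [inv_le_comm₀ (by linarith) (by norm_num)]
          linarith
        nlinarith
      · intro j
        have h1 : (x j.1) ^ 2 ≤ 1 - (x i₀) ^ 2 := by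
          have h2 : (x j.1) ^ 2 ≤ ∑ k : {j : Fin d // j ≠ i₀}, (x k.1) ^ 2 :=
            Finset.single_le_sum (f := fun k : {j : Fin d // j ≠ i₀} => (x k.1) ^ 2)
              (fun k _ => sq_nonneg _) (Finset.mem_univ j)
          rwa [sum_sq_compl, sum_sq_eq_one hx1] at h2
        calc |x j.1| = Real.sqrt ((x j.1) ^ 2) := (Real.sqrt_sq_eq_abs _).symm
          _ ≤ Real.sqrt (t ^ 2) := Real.sqrt_le_sqrt (by linarith)
          _ = t := Real.sqrt_sq ht0.le
    have hchart : ∀ σ : ℝ, σ = 1 ∨ σ = -1 →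
        μH[(d : ℝ) - 1] {x | x ∈ B ∧ 0 ≤ σ * x i₀}
          ≤ Kc d * ((2:ℝ≥0∞) ^ ((d:ℝ)-1) * (ENNReal.ofReal t) ^ ((d:ℝ)-1)) := by
      intro σ hσ
      have h := chart_est hd i₀ σ hσ {x | x ∈ B ∧ 0 ≤ σ * x i₀}
        (fun x hx => ⟨hx.1.1, (hkey x hx.1).1, hx.2⟩)
        (fun _ => t) (fun _ => ht0.le)
        (fun ω hω j => (hkey ω hω.1).2 j)
      refine h.trans (mul_le_mul_right (le_of_eq ?_) _)
      rw [Finset.prod_const, Finset.card_univ]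
      have hcard : Fintype.card {j : Fin d // j ≠ i₀} = d - 1 := by
        rw [Fintype.card_subtype_compl, Fintype.card_fin, Fintype.card_subtype_eq]
      rw [hcard]
      have hcast : ((d - 1 : ℕ) : ℝ) = (d:ℝ) - 1 := by
        rw [Nat.cast_sub hd, Nat.cast_one]
      rw [← ENNReal.rpow_natCast _ (d-1), hcast, ENNReal.ofReal_mul (by norm_num),
        ENNReal.mul_rpow_of_nonneg _ _ he0]
      norm_num
    have hcov : B ⊆ {x | x ∈ B ∧ 0 ≤ (1:ℝ) * x i₀} ∪ {x | x ∈ B ∧ 0 ≤ (-1:ℝ) * x i₀} := by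
      intro x hx
      rcases le_total 0 (x i₀) with h | h
      · left; exact ⟨hx, by linarith⟩
      · right; exact ⟨hx, by linarith⟩
    calc μH[(d : ℝ) - 1] B
        ≤ μH[(d : ℝ) - 1] ({x | x ∈ B ∧ 0 ≤ (1:ℝ) * x i₀} ∪ {x | x ∈ B ∧ 0 ≤ (-1:ℝ) * x i₀}) :=
          measure_mono hcov
      _ ≤ μH[(d : ℝ) - 1] {x | x ∈ B ∧ 0 ≤ (1:ℝ) * x i₀} +
          μH[(d : ℝ) - 1] {x | x ∈ B ∧ 0 ≤ (-1:ℝ) * x i₀} := measure_union_le _ _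
      _ ≤ Kc d * ((2:ℝ≥0∞) ^ ((d:ℝ)-1) * (ENNReal.ofReal t) ^ ((d:ℝ)-1)) +
          Kc d * ((2:ℝ≥0∞) ^ ((d:ℝ)-1) * (ENNReal.ofReal t) ^ ((d:ℝ)-1)) :=
          add_le_add (hchart 1 (Or.inl rfl)) (hchart (-1) (Or.inr rfl))
      _ = (2 * Kc d * (2:ℝ≥0∞) ^ ((d:ℝ)-1)) * (ENNReal.ofReal t) ^ ((d:ℝ)-1) := by ring
      _ ≤ CCc d * (ENNReal.ofReal t) ^ ((d:ℝ)-1) := by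
          refine mul_le_mul_left ?_ _
          rw [CCc, add_mul]
          exact le_add_self

lemma exists_rot (hd : 1 ≤ d) {u : Ed d} (hu : ‖u‖ = 1) (i₀ : Fin d) :
    ∃ e : Ed d ≃ₗᵢ[ℝ] EuclideanSpace ℝ (Fin d), ∀ x : Ed d, (e x) i₀ = ⟪x, u⟫ := by
  have hcard : Module.finrank ℝ (Ed d) = Fintype.card (Fin d) := by
    simp
  have horth : Orthonormal ℝ (({i₀} : Set (Fin d)).restrict (fun _ => u)) := by
    constructor
    · intro i; exact hu
    · intro i j hij
      exfalso
      apply hij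
      have hi := i.2
      have hj := j.2
      simp only [mem_singleton_iff] at hi hj
      exact Subtype.ext (hi.trans hj.symm)
  obtain ⟨b, hb⟩ := horth.exists_orthonormalBasis_extension_of_card_eq hcard
  refine ⟨b.repr, fun x => ?_⟩
  rw [b.repr_apply_apply, hb i₀ rfl]
  exact real_inner_comm _ _

lemma capB (hd2 : 2 ≤ d) {u : Ed d} (hu : ‖u‖ = 1) {t : ℝ} (ht0 : 0 < t) (ht1 : t ≤ 1) :
    μH[(d : ℝ) - 1] {x : Ed d | ‖x‖ = 1 ∧ |(⟪x, u⟫ : ℝ)| ≤ t} ≤ CBc d * ENNReal.ofReal t := by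
  have i₀ : Fin d := ⟨0, by omega⟩
  obtain ⟨e, he⟩ := exists_rot (by omega) hu i₀
  have hset : {x : Ed d | ‖x‖ = 1 ∧ |(⟪x, u⟫ : ℝ)| ≤ t}
      = e.toIsometryEquiv ⁻¹' {y : EuclideanSpace ℝ (Fin d) | ‖y‖ = 1 ∧ |y i₀| ≤ t} := by
    ext x
    simp only [mem_preimage, mem_setOf_eq, LinearIsometryEquiv.coe_toIsometryEquiv]
    rw [e.norm_map, he x]
  rw [hset, IsometryEquiv.hausdorffMeasure_preimage]
  exact capB0 hd2 i₀ ht0 ht1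

lemma capC (hd2 : 2 ≤ d) {u : Ed d} (hu : ‖u‖ = 1) {t : ℝ} (ht0 : 0 < t) (ht1 : t ≤ 1) :
    μH[(d : ℝ) - 1] {x : Ed d | ‖x‖ = 1 ∧ Real.sqrt (1 - (⟪x, u⟫ : ℝ) ^ 2) ≤ t}
      ≤ CCc d * (ENNReal.ofReal t) ^ ((d : ℝ) - 1) := by
  have i₀ : Fin d := ⟨0, by omega⟩
  obtain ⟨e, he⟩ := exists_rot (by omega) hu i₀
  have hset : {x : Ed d | ‖x‖ = 1 ∧ Real.sqrt (1 - (⟪x, u⟫ : ℝ) ^ 2) ≤ t}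
      = e.toIsometryEquiv ⁻¹'
        {y : EuclideanSpace ℝ (Fin d) | ‖y‖ = 1 ∧ Real.sqrt (1 - (y i₀) ^ 2) ≤ t} := by
    ext x
    simp only [mem_preimage, mem_setOf_eq, LinearIsometryEquiv.coe_toIsometryEquiv]
    rw [e.norm_map, he x]
  rw [hset, IsometryEquiv.hausdorffMeasure_preimage]
  exact capC0 hd2 i₀ ht0 ht1

lemma pow_half_eq (k : ℕ) : ENNReal.ofReal ((1/2 : ℝ) ^ k) = (2 : ℝ≥0∞) ^ (-(k : ℝ)) := by
  rw [ENNReal.ofReal_pow (by norm_num)]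
  have h1 : ENNReal.ofReal (1/2 : ℝ) = (2 : ℝ≥0∞)⁻¹ := by
    rw [one_div, ENNReal.ofReal_inv_of_pos (by norm_num)]
    norm_num
  rw [h1, ENNReal.rpow_neg, ENNReal.rpow_natCast]
  exact (ENNReal.inv_pow).symm

lemma dyadic {ν : Measure (Ed d)} (S : Set (Ed d)) (hS : MeasurableSet S)
    (g : Ed d → ℝ) (hg : Measurable g) (f : Ed d → ℝ≥0∞)
    (K Ccap : ℝ≥0∞) (hCcap : Ccap ≠ ⊤) (γ m : ℝ) (hγ0 : 0 < γ) (hγm : γ < m)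
    (cap : ∀ t : ℝ, 0 < t → t ≤ 1 → ν {x | x ∈ S ∧ g x ≤ t} ≤ Ccap * (ENNReal.ofReal t) ^ m)
    (hg1 : ∀ x ∈ S, g x ≤ 1)
    (hf : ∀ x ∈ S, f x ≤ K * (ENNReal.ofReal (g x)) ^ (-γ)) :
    ∫⁻ x in S, f x ∂ν
      ≤ K * Ccap * ((2 : ℝ≥0∞) ^ γ * (1 - (2 : ℝ≥0∞) ^ (γ - m))⁻¹) := by
  have hm0 : 0 < m := hγ0.trans hγm
  set A : ℕ → Set (Ed d) :=
    fun k => {x | x ∈ S ∧ ((1/2 : ℝ) ^ (k+1) < g x ∧ g x ≤ (1/2 : ℝ) ^ k)} with hA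
  set Z : Set (Ed d) := {x | x ∈ S ∧ g x ≤ 0} with hZdef
  -- Z is null
  have hZ0 : ν Z = 0 := by
    have hk : ∀ k : ℕ, ν Z ≤ Ccap * ((2:ℝ≥0∞) ^ (-m)) ^ k := by
      intro k
      have h1 : ν Z ≤ Ccap * (ENNReal.ofReal ((1/2:ℝ) ^ k)) ^ m := by
        refine (measure_mono ?_).trans
          (cap _ (by positivity) (pow_le_one₀ (by norm_num) (by norm_num)))
        intro x hx
        exact ⟨hx.1, le_trans hx.2 (by positivity)⟩
      refine h1.trans (le_of_eq ?_)
      congr 1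
      rw [pow_half_eq k, ← ENNReal.rpow_natCast ((2:ℝ≥0∞) ^ (-m)) k, ← ENNReal.rpow_mul,
        ← ENNReal.rpow_mul]
      congr 1
      ring
    have htend : Filter.Tendsto (fun k : ℕ => Ccap * ((2:ℝ≥0∞) ^ (-m)) ^ k)
        Filter.atTop (nhds 0) := by
      have hr : (2:ℝ≥0∞) ^ (-m) < 1 :=
        ENNReal.rpow_lt_one_of_one_lt_of_neg (by norm_num) (by linarith)
      have := ENNReal.Tendsto.const_mul
        (ENNReal.tendsto_pow_atTop_nhds_zero_of_lt_one hr) (Or.inr hCcap)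
      simpa using this
    have : ν Z ≤ 0 := ge_of_tendsto htend (Filter.Eventually.of_forall hk)
    exact le_antisymm this (zero_le)
  -- covering
  have hcov : S ⊆ Z ∪ ⋃ k, A k := by
    intro x hx
    rcases le_or_gt (g x) 0 with h0 | h0
    · exact Or.inl ⟨hx, h0⟩
    · right
      have hex : ∃ n : ℕ, (1/2:ℝ) ^ (n+1) < g x := by
        obtain ⟨n, hn⟩ := exists_pow_lt_of_lt_one h0 (by norm_num : (1/2:ℝ) < 1)
        refine ⟨n, lt_of_le_of_lt ?_ hn⟩
        exact pow_le_pow_of_le_one (by norm_num) (by norm_num) (Nat.le_succ n)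
      refine mem_iUnion.mpr ⟨Nat.find hex, hx, Nat.find_spec hex, ?_⟩
      rcases Nat.eq_zero_or_pos (Nat.find hex) with hk0 | hkpos
      · rw [hk0, pow_zero]; exact hg1 x hx
      · have hmin := Nat.find_min hex (m := Nat.find hex - 1) (by omega)
        push_neg at hmin
        have : g x ≤ (1/2:ℝ) ^ (Nat.find hex - 1 + 1) := hmin
        rwa [Nat.sub_add_cancel hkpos] at this
  -- per piece bound
  have hAk : ∀ k : ℕ, ∫⁻ x in A k, f x ∂ν
      ≤ (K * (2:ℝ≥0∞) ^ (((k:ℝ)+1) * γ)) * (Ccap * ((2:ℝ≥0∞) ^ (-m)) ^ k) := by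
    intro k
    have hAkm : MeasurableSet (A k) := by
      have : A k = S ∩ g ⁻¹' (Ioc ((1/2:ℝ) ^ (k+1)) ((1/2:ℝ) ^ k)) := by
        ext x; simp only [hA, mem_setOf_eq, mem_inter_iff, mem_preimage, mem_Ioc]
      rw [this]
      exact hS.inter (hg measurableSet_Ioc)
    have hbnd : ∀ x ∈ A k, f x ≤ K * (2:ℝ≥0∞) ^ (((k:ℝ)+1) * γ) := by
      intro x hx
      refine (hf x hx.1).trans (mul_le_mul_right ?_ _)
      have h1 : ENNReal.ofReal ((1/2:ℝ) ^ (k+1)) ≤ ENNReal.ofReal (g x) :=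
        ENNReal.ofReal_le_ofReal hx.2.1.le
      calc (ENNReal.ofReal (g x)) ^ (-γ)
          ≤ (ENNReal.ofReal ((1/2:ℝ) ^ (k+1))) ^ (-γ) := by
            rw [ENNReal.rpow_neg, ENNReal.rpow_neg]
            exact ENNReal.inv_le_inv' (ENNReal.rpow_le_rpow h1 hγ0.le)
        _ = (2:ℝ≥0∞) ^ (((k:ℝ)+1) * γ) := by
            rw [pow_half_eq (k+1), ← ENNReal.rpow_mul]
            congr 1
            push_cast
            ring
    have hνAk : ν (A k) ≤ Ccap * ((2:ℝ≥0∞) ^ (-m)) ^ k := by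
      have hsub : A k ⊆ {x | x ∈ S ∧ g x ≤ (1/2:ℝ) ^ k} := fun x hx => ⟨hx.1, hx.2.2⟩
      have h1 : ν (A k) ≤ Ccap * (ENNReal.ofReal ((1/2:ℝ) ^ k)) ^ m :=
        (measure_mono hsub).trans
          (cap _ (by positivity) (pow_le_one₀ (by norm_num) (by norm_num)))
      refine h1.trans (le_of_eq ?_)
      congr 1
      rw [pow_half_eq k, ← ENNReal.rpow_natCast ((2:ℝ≥0∞) ^ (-m)) k, ← ENNReal.rpow_mul,
        ← ENNReal.rpow_mul]
      congr 1
      ring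
    calc ∫⁻ x in A k, f x ∂ν
        ≤ ∫⁻ _x in A k, (K * (2:ℝ≥0∞) ^ (((k:ℝ)+1) * γ)) ∂ν :=
          setLIntegral_mono measurable_const hbnd
      _ = (K * (2:ℝ≥0∞) ^ (((k:ℝ)+1) * γ)) * ν (A k) := setLIntegral_const _ _
      _ ≤ (K * (2:ℝ≥0∞) ^ (((k:ℝ)+1) * γ)) * (Ccap * ((2:ℝ≥0∞) ^ (-m)) ^ k) :=
          mul_le_mul_right hνAk _
  -- sum up
  calc ∫⁻ x in S, f x ∂ν
      ≤ ∫⁻ x in Z ∪ ⋃ k, A k, f x ∂ν :=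
        lintegral_mono' (Measure.restrict_mono hcov le_rfl) le_rfl
    _ ≤ (∫⁻ x in Z, f x ∂ν) + ∫⁻ x in ⋃ k, A k, f x ∂ν := lintegral_union_le _ _ _
    _ = ∫⁻ x in ⋃ k, A k, f x ∂ν := by
        rw [setLIntegral_measure_zero _ _ hZ0, zero_add]
    _ ≤ ∑' k, ∫⁻ x in A k, f x ∂ν := lintegral_iUnion_le _ _
    _ ≤ ∑' k : ℕ, (K * (2:ℝ≥0∞) ^ (((k:ℝ)+1) * γ)) * (Ccap * ((2:ℝ≥0∞) ^ (-m)) ^ k) :=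
        ENNReal.tsum_le_tsum hAk
    _ = K * Ccap * ((2:ℝ≥0∞) ^ γ * (1 - (2:ℝ≥0∞) ^ (γ - m))⁻¹) := by
        have hterm : ∀ k : ℕ,
            (K * (2:ℝ≥0∞) ^ (((k:ℝ)+1) * γ)) * (Ccap * ((2:ℝ≥0∞) ^ (-m)) ^ k)
              = (K * Ccap * (2:ℝ≥0∞) ^ γ) * ((2:ℝ≥0∞) ^ (γ - m)) ^ k := by
          intro k
          rw [← ENNReal.rpow_natCast ((2:ℝ≥0∞) ^ (-m)) k, ← ENNReal.rpow_mul,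
            ← ENNReal.rpow_natCast ((2:ℝ≥0∞) ^ (γ - m)) k, ← ENNReal.rpow_mul]
          have h2 : ((2:ℝ≥0∞) ^ (((k:ℝ)+1) * γ)) = (2:ℝ≥0∞) ^ γ * (2:ℝ≥0∞) ^ ((k:ℝ) * γ) := by
            rw [← ENNReal.rpow_add _ _ (by norm_num) (by norm_num)]
            congr 1
            ring
          rw [h2]
          have h3 : ((2:ℝ≥0∞) ^ ((k:ℝ) * γ)) * (2:ℝ≥0∞) ^ (-m * (k:ℝ))
              = (2:ℝ≥0∞) ^ ((γ - m) * (k:ℝ)) := by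
            rw [← ENNReal.rpow_add _ _ (by norm_num) (by norm_num)]
            congr 1
            ring
          calc K * ((2:ℝ≥0∞) ^ γ * (2:ℝ≥0∞) ^ ((k:ℝ) * γ)) *
                (Ccap * (2:ℝ≥0∞) ^ (-m * (k:ℝ)))
              = K * Ccap * (2:ℝ≥0∞) ^ γ *
                ((2:ℝ≥0∞) ^ ((k:ℝ) * γ) * (2:ℝ≥0∞) ^ (-m * (k:ℝ))) := by ring
            _ = K * Ccap * (2:ℝ≥0∞) ^ γ * (2:ℝ≥0∞) ^ ((γ - m) * (k:ℝ)) := by rw [h3]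
        rw [tsum_congr hterm, ENNReal.tsum_mul_left, ENNReal.tsum_geometric]
        ring

lemma helper1 {R x q : ℝ} (hR : 0 ≤ R) (hx0 : 0 ≤ x) (hx1 : x ≤ 1)
    (hq0 : 0 ≤ q) (hq1 : q ≤ 1) :
    (max R 1 * x) ^ q ≤ Real.sqrt (1 + R ^ 2 * x ^ 2) := by
  set M := max R 1 with hM
  have hM1 : (1:ℝ) ≤ M := le_max_right _ _
  have hMx0 : 0 ≤ M * x := by positivity
  have hsq1 : (1:ℝ) ≤ Real.sqrt (1 + R ^ 2 * x ^ 2) := by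
    have h := Real.sqrt_le_sqrt (show (1:ℝ) ≤ 1 + R ^ 2 * x ^ 2 by nlinarith)
    rwa [Real.sqrt_one] at h
  rcases le_or_gt (M * x) 1 with h | h
  · exact le_trans (Real.rpow_le_one hMx0 h hq0) (by simpa using hsq1)
  · have hR1 : 1 < R := by
      by_contra hcon
      push_neg at hcon
      have hMeq : M = 1 := max_eq_right hcon
      rw [hMeq, one_mul] at h
      linarith
    have hMR : M = R := max_eq_left hR1.le
    have h1 : (M * x) ^ q ≤ M * x := by
      calc (M * x) ^ q ≤ (M * x) ^ (1:ℝ) := Real.rpow_le_rpow_of_exponent_le h.le hq1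
        _ = M * x := Real.rpow_one _
    refine h1.trans ?_
    rw [hMR]
    calc R * x = Real.sqrt ((R * x) ^ 2) := (Real.sqrt_sq (by positivity)).symm
      _ ≤ Real.sqrt (1 + R ^ 2 * x ^ 2) := Real.sqrt_le_sqrt (by nlinarith)

lemma helper2 {R y : ℝ} (hR : 0 ≤ R) (hy0 : 0 ≤ y) (hy1 : y ≤ 1) :
    Real.sqrt (1 + R ^ 2 * y ^ 2) ≤ Real.sqrt 2 * max R 1 := by
  set M := max R 1 with hM
  have hM1 : (1:ℝ) ≤ M := le_max_right _ _
  have hMR : R ≤ M := le_max_left _ _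
  have hy2 : y ^ 2 ≤ 1 := by nlinarith
  have h1 : 1 + R ^ 2 * y ^ 2 ≤ 2 * M ^ 2 := by
    nlinarith [pow_le_pow_left₀ hR hMR 2, hy2, sq_nonneg R, hM1]
  calc Real.sqrt (1 + R ^ 2 * y ^ 2) ≤ Real.sqrt (2 * M ^ 2) := Real.sqrt_le_sqrt h1
    _ = Real.sqrt 2 * M := by
        rw [Real.sqrt_mul (by norm_num), Real.sqrt_sq (by linarith)]

lemma core {R x y α b g : ℝ} (hR : 0 ≤ R) (hx0 : 0 < x) (hx1 : x ≤ 1)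
    (hy0 : 0 ≤ y) (hy1 : y ≤ 1) (hα : 0 < α) (hb : 0 ≤ b) (hbg : b ≤ g) (hgα : g ≤ α) :
    Real.sqrt (1 + R ^ 2 * x ^ 2) ^ (-α) * Real.sqrt (1 + R ^ 2 * y ^ 2) ^ b
      ≤ 2 ^ (b / 2) * x ^ (-g) := by
  set M := max R 1 with hM
  have hM1 : (1:ℝ) ≤ M := le_max_right _ _
  have hM0 : (0:ℝ) < M := by linarith
  have hMx : 0 < M * x := by positivity
  have hq1 : g / α ≤ 1 := (div_le_one hα).mpr hgα
  have hq0 : 0 ≤ g / α := div_nonneg (hb.trans hbg) hα.le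
  have h1 : Real.sqrt (1 + R ^ 2 * x ^ 2) ^ (-α) ≤ ((M * x) ^ (g / α)) ^ (-α) :=
    Real.rpow_le_rpow_of_nonpos (Real.rpow_pos_of_pos hMx _)
      (helper1 hR hx0.le hx1 hq0 hq1) (by linarith)
  have h2 : ((M * x) ^ (g / α)) ^ (-α) = (M * x) ^ (-g) := by
    rw [← Real.rpow_mul hMx.le]
    congr 1
    field_simp
  have h3 : Real.sqrt (1 + R ^ 2 * y ^ 2) ^ b ≤ (Real.sqrt 2 * M) ^ b :=
    Real.rpow_le_rpow (Real.sqrt_nonneg _) (helper2 hR hy0 hy1) hb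
  calc Real.sqrt (1 + R ^ 2 * x ^ 2) ^ (-α) * Real.sqrt (1 + R ^ 2 * y ^ 2) ^ b
      ≤ (M * x) ^ (-g) * (Real.sqrt 2 * M) ^ b := by
        refine mul_le_mul (h1.trans_eq h2) h3 (Real.rpow_nonneg (Real.sqrt_nonneg _) _) ?_
        positivity
    _ = (Real.sqrt 2) ^ b * (M ^ b * M ^ (-g)) * x ^ (-g) := by
        rw [Real.mul_rpow hM0.le hx0.le, Real.mul_rpow (Real.sqrt_nonneg _) hM0.le]
        ring
    _ ≤ 2 ^ (b / 2) * x ^ (-g) := by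
        have hsb : (Real.sqrt 2) ^ b = 2 ^ (b / 2) := by
          rw [Real.sqrt_eq_rpow, ← Real.rpow_mul (by norm_num)]
          congr 1
          ring
        have hMb : M ^ b * M ^ (-g) ≤ 1 := by
          rw [← Real.rpow_add hM0]
          exact Real.rpow_le_one_of_one_le_of_nonpos hM1 (by linarith)
        rw [hsb]
        have hx2 : (0:ℝ) ≤ x ^ (-g) := Real.rpow_nonneg hx0.le _
        have h4 : (0:ℝ) ≤ (2:ℝ) ^ (b / 2) := Real.rpow_nonneg (by norm_num) _
        calc 2 ^ (b / 2) * (M ^ b * M ^ (-g)) * x ^ (-g)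
            ≤ 2 ^ (b / 2) * 1 * x ^ (-g) := by
              refine mul_le_mul_of_nonneg_right (mul_le_mul_of_nonneg_left hMb h4) hx2
          _ = 2 ^ (b / 2) * x ^ (-g) := by ring

lemma jap_eqs {W ω : Ed d} (hW : W ≠ 0) (hω : ‖ω‖ = 1) :
    ((⟪ω, (‖W‖⁻¹ • W : Ed d)⟫ : ℝ)) ^ 2 ≤ 1 ∧
    jap (par ω W) = Real.sqrt (1 + ‖W‖ ^ 2 * ((⟪ω, (‖W‖⁻¹ • W : Ed d)⟫ : ℝ)) ^ 2) ∧
    jap (perp ω W) = Real.sqrt (1 + ‖W‖ ^ 2 *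
      (Real.sqrt (1 - ((⟪ω, (‖W‖⁻¹ • W : Ed d)⟫ : ℝ)) ^ 2)) ^ 2) := by
  have hR0 : 0 < ‖W‖ := norm_pos_iff.mpr hW
  set s : ℝ := (⟪ω, (‖W‖⁻¹ • W : Ed d)⟫ : ℝ) with hs
  have hu : ‖(‖W‖⁻¹ • W : Ed d)‖ = 1 := norm_smul_inv_norm hW
  have hs1 : |s| ≤ 1 := by
    have := abs_real_inner_le_norm ω (‖W‖⁻¹ • W : Ed d)
    rwa [hω, hu, one_mul] at this
  have hs2 : s ^ 2 ≤ 1 := by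
    rw [← sq_abs]
    nlinarith [abs_nonneg s]
  have hiW : (⟪ω, W⟫ : ℝ) = ‖W‖ * s := by
    have hWu : W = ‖W‖ • ((‖W‖⁻¹ • W : Ed d)) := by
      rw [smul_smul, mul_inv_cancel₀ hR0.ne', one_smul]
    conv_lhs => rw [hWu]
    rw [real_inner_smul_right]
  have hpar2 : ‖par ω W‖ ^ 2 = (⟪ω, W⟫ : ℝ) ^ 2 := by
    rw [par, norm_smul, Real.norm_eq_abs, hω, mul_one, sq_abs]
  have hperp2 : ‖perp ω W‖ ^ 2 = ‖W‖ ^ 2 - (⟪ω, W⟫ : ℝ) ^ 2 := by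
    have h1 : (⟪W, ((⟪ω, W⟫ : ℝ) • ω : Ed d)⟫ : ℝ) = (⟪ω, W⟫ : ℝ) ^ 2 := by
      rw [real_inner_smul_right, real_inner_comm]
      ring
    have h2 : ‖((⟪ω, W⟫ : ℝ) • ω : Ed d)‖ ^ 2 = (⟪ω, W⟫ : ℝ) ^ 2 := by
      rw [norm_smul, Real.norm_eq_abs, hω, mul_one, sq_abs]
    rw [perp, par, norm_sub_sq_real, h1, h2]
    ring
  refine ⟨hs2, ?_, ?_⟩
  · rw [jap, hpar2, hiW]
    congr 1
    ring
  · rw [jap, hperp2, hiW, Real.sq_sqrt (by linarith)]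
    congr 1
    ring

lemma bound2 (hd2 : 2 ≤ d) {β : ℝ} (hβ : (d : ℝ) / 2 < β) {W ω : Ed d} (hW : W ≠ 0)
    (hω : ‖ω‖ = 1) :
    ENNReal.ofReal ((jap (perp ω W)) ^ (1/2 : ℝ) * (jap (par ω W)) ^ ((d : ℝ) - 1 - 2 * β))
      ≤ ENNReal.ofReal 2 *
        (ENNReal.ofReal |(⟪ω, (‖W‖⁻¹ • W : Ed d)⟫ : ℝ)|) ^ (-(3/4 : ℝ)) := by
  obtain ⟨hs2, hpar, hperp⟩ := jap_eqs hW hω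
  set s : ℝ := (⟪ω, (‖W‖⁻¹ • W : Ed d)⟫ : ℝ) with hs
  have hdR : (2:ℝ) ≤ (d:ℝ) := by exact_mod_cast hd2
  rcases eq_or_lt_of_le (abs_nonneg s) with h0 | h0
  · rw [← h0]
    rw [ENNReal.ofReal_zero, ENNReal.zero_rpow_of_neg (by norm_num)]
    rw [ENNReal.mul_top (by norm_num)]
    exact le_top
  · have hreal : (jap (perp ω W)) ^ (1/2 : ℝ) * (jap (par ω W)) ^ ((d : ℝ) - 1 - 2 * β)
        ≤ 2 * |s| ^ (-(3/4 : ℝ)) := by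
      rw [hpar, hperp]
      have hexp : (d : ℝ) - 1 - 2 * β = -(2 * β - ((d:ℝ) - 1)) := by ring
      have habs : ‖W‖ ^ 2 * s ^ 2 = ‖W‖ ^ 2 * |s| ^ 2 := by rw [sq_abs]
      rw [hexp, habs, mul_comm (Real.sqrt (1 + ‖W‖ ^ 2 * (Real.sqrt (1 - s ^ 2)) ^ 2) ^ (1/2:ℝ))]
      have hcore := core (R := ‖W‖) (x := |s|) (y := Real.sqrt (1 - s ^ 2))
        (α := 2 * β - ((d:ℝ) - 1)) (b := (1/2 : ℝ)) (g := (3/4 : ℝ))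
        (norm_nonneg W) h0 (by nlinarith [hs2, abs_nonneg s, sq_abs s])
        (Real.sqrt_nonneg _)
        (by
          have h := Real.sqrt_le_sqrt (show 1 - s ^ 2 ≤ (1:ℝ) by nlinarith)
          rwa [Real.sqrt_one] at h)
        (by linarith) (by norm_num) (by norm_num) (by linarith)
      refine hcore.trans ?_
      have h24 : (2:ℝ) ^ ((1/2 : ℝ) / 2) ≤ 2 := by
        calc (2:ℝ) ^ ((1/2 : ℝ) / 2) ≤ (2:ℝ) ^ (1:ℝ) :=
            Real.rpow_le_rpow_of_exponent_le one_le_two (by norm_num)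
          _ = 2 := Real.rpow_one _
      exact mul_le_mul_of_nonneg_right h24 (Real.rpow_nonneg (abs_nonneg s) _)
    calc ENNReal.ofReal ((jap (perp ω W)) ^ (1/2 : ℝ) * (jap (par ω W)) ^ ((d : ℝ) - 1 - 2 * β))
        ≤ ENNReal.ofReal (2 * |s| ^ (-(3/4 : ℝ))) := ENNReal.ofReal_le_ofReal hreal
      _ = ENNReal.ofReal 2 * ENNReal.ofReal (|s| ^ (-(3/4 : ℝ))) := by
          rw [ENNReal.ofReal_mul (by norm_num)]
      _ = ENNReal.ofReal 2 * (ENNReal.ofReal |s|) ^ (-(3/4 : ℝ)) := by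
          rw [ENNReal.ofReal_rpow_of_pos h0]

lemma bound1 (hd2 : 2 ≤ d) {β : ℝ} (hβ : (d : ℝ) / 2 < β) {W ω : Ed d} (hW : W ≠ 0)
    (hω : ‖ω‖ = 1) :
    ENNReal.ofReal ((jap (perp ω W)) ^ (1 - 2 * β) * (jap (par ω W)) ^ ((d : ℝ) - 2 + 1/2))
      ≤ ENNReal.ofReal ((2:ℝ) ^ (d : ℝ)) *
        (ENNReal.ofReal (Real.sqrt (1 - ((⟪ω, (‖W‖⁻¹ • W : Ed d)⟫ : ℝ)) ^ 2)))
          ^ (-((d : ℝ) - 2 + 1/2)) := by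
  obtain ⟨hs2, hpar, hperp⟩ := jap_eqs hW hω
  set s : ℝ := (⟪ω, (‖W‖⁻¹ • W : Ed d)⟫ : ℝ) with hs
  set y : ℝ := Real.sqrt (1 - s ^ 2) with hy
  have hdR : (2:ℝ) ≤ (d:ℝ) := by exact_mod_cast hd2
  rcases eq_or_lt_of_le (Real.sqrt_nonneg (1 - s ^ 2)) with h0 | h0
  · rw [hy, ← h0]
    rw [ENNReal.ofReal_zero, ENNReal.zero_rpow_of_neg (by linarith)]
    rw [ENNReal.mul_top ?hne]
    · exact le_top
    case hne =>
      simp only [ne_eq, ENNReal.ofReal_eq_zero, not_le]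
      positivity
  · have hy1 : y ≤ 1 := by
      have h := Real.sqrt_le_sqrt (show 1 - s ^ 2 ≤ (1:ℝ) by nlinarith)
      rw [Real.sqrt_one] at h
      rw [hy]
      exact h
    have hreal : (jap (perp ω W)) ^ (1 - 2 * β) * (jap (par ω W)) ^ ((d : ℝ) - 2 + 1/2)
        ≤ (2:ℝ) ^ (d:ℝ) * y ^ (-((d : ℝ) - 2 + 1/2)) := by
      rw [hpar, hperp]
      have hexp : 1 - 2 * β = -(2 * β - 1) := by ring
      have habs : ‖W‖ ^ 2 * s ^ 2 = ‖W‖ ^ 2 * |s| ^ 2 := by rw [sq_abs]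
      rw [hexp, habs]
      have hcore := core (R := ‖W‖) (x := y) (y := |s|)
        (α := 2 * β - 1) (b := (d : ℝ) - 2 + 1/2) (g := (d : ℝ) - 2 + 1/2)
        (norm_nonneg W) h0 hy1 (abs_nonneg s)
        (by nlinarith [hs2, abs_nonneg s, sq_abs s])
        (by linarith) (by linarith) le_rfl (by linarith)
      refine hcore.trans ?_
      have h24 : (2:ℝ) ^ (((d : ℝ) - 2 + 1/2) / 2) ≤ (2:ℝ) ^ (d:ℝ) :=
        Real.rpow_le_rpow_of_exponent_le one_le_two (by linarith)
      exact mul_le_mul_of_nonneg_right h24 (Real.rpow_nonneg (Real.sqrt_nonneg _) _)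
    calc ENNReal.ofReal ((jap (perp ω W)) ^ (1 - 2 * β) * (jap (par ω W)) ^ ((d : ℝ) - 2 + 1/2))
        ≤ ENNReal.ofReal ((2:ℝ) ^ (d:ℝ) * y ^ (-((d : ℝ) - 2 + 1/2))) :=
          ENNReal.ofReal_le_ofReal hreal
      _ = ENNReal.ofReal ((2:ℝ) ^ (d:ℝ)) * ENNReal.ofReal (y ^ (-((d : ℝ) - 2 + 1/2))) := by
          rw [ENNReal.ofReal_mul (by positivity)]
      _ = ENNReal.ofReal ((2:ℝ) ^ (d:ℝ)) * (ENNReal.ofReal y) ^ (-((d : ℝ) - 2 + 1/2)) := by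
          rw [ENNReal.ofReal_rpow_of_pos h0]

end Stmt13Aux

/-- For `d ≥ 2`, `β > d/2` and suitably small `ε > 0` (depending on `β`), the
angular-averaging integrals
`∫_{S^{d-1}} ⟨W^⊥⟩^{1−2β} ⟨W^∥⟩^{d−2+ε} dω` and
`∫_{S^{d-1}} ⟨W^⊥⟩^{ε} ⟨W^∥⟩^{d−1−2β} dω`
(w.r.t. the surface ((d−1)-Hausdorff) measure on the unit sphere)
are bounded uniformly in `W`. -/
theorem stmt_13 (d : ℕ) (hd : 2 ≤ d) (β : ℝ) (hβ : (d : ℝ) / 2 < β) :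
    ∃ ε : ℝ, 0 < ε ∧ ∃ C : ℝ≥0∞, C ≠ ⊤ ∧ ∀ W : Ed d,
      (∫⁻ ω in Metric.sphere (0 : Ed d) 1,
          ENNReal.ofReal ((jap (perp ω W)) ^ (1 - 2 * β) *
            (jap (par ω W)) ^ ((d : ℝ) - 2 + ε)) ∂μH[(d : ℝ) - 1]) ≤ C
      ∧ (∫⁻ ω in Metric.sphere (0 : Ed d) 1,
          ENNReal.ofReal ((jap (perp ω W)) ^ ε *
            (jap (par ω W)) ^ ((d : ℝ) - 1 - 2 * β)) ∂μH[(d : ℝ) - 1]) ≤ C := by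
  classical
  have hd1 : 1 ≤ d := by omega
  have hdR : (2:ℝ) ≤ (d:ℝ) := by exact_mod_cast hd
  refine ⟨1/2, by norm_num, ?_⟩
  set γ1 : ℝ := (d:ℝ) - 2 + 1/2 with hγ1def
  set K1 : ℝ≥0∞ := ENNReal.ofReal ((2:ℝ) ^ (d:ℝ)) with hK1def
  set B1 : ℝ≥0∞ :=
    K1 * Stmt13Aux.CCc d * ((2:ℝ≥0∞) ^ γ1 * (1 - (2:ℝ≥0∞) ^ (γ1 - ((d:ℝ) - 1)))⁻¹) with hB1def
  set K2 : ℝ≥0∞ := ENNReal.ofReal (2:ℝ) with hK2def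
  set B2 : ℝ≥0∞ :=
    K2 * Stmt13Aux.CBc d * ((2:ℝ≥0∞) ^ (3/4 : ℝ) * (1 - (2:ℝ≥0∞) ^ ((3/4 : ℝ) - 1))⁻¹)
    with hB2def
  have hinv_ne_top : ∀ e : ℝ, e < 0 → (1 - (2:ℝ≥0∞) ^ e)⁻¹ ≠ ⊤ := by
    intro e he
    rw [Ne, ENNReal.inv_eq_top]
    have hq : (2:ℝ≥0∞) ^ e < 1 :=
      ENNReal.rpow_lt_one_of_one_lt_of_neg (by norm_num) he
    have hpos : 0 < 1 - (2:ℝ≥0∞) ^ e := tsub_pos_of_lt hq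
    exact hpos.ne'
  have hB1_ne_top : B1 ≠ ⊤ := by
    rw [hB1def]
    refine ENNReal.mul_ne_top (ENNReal.mul_ne_top ENNReal.ofReal_ne_top
      (Stmt13Aux.CCc_ne_top hd1)) (ENNReal.mul_ne_top ?_ (hinv_ne_top _ ?_))
    · exact ENNReal.rpow_ne_top_of_nonneg (by rw [hγ1def]; linarith) (by norm_num)
    · rw [hγ1def]; linarith
  have hB2_ne_top : B2 ≠ ⊤ := by
    rw [hB2def]
    refine ENNReal.mul_ne_top (ENNReal.mul_ne_top ENNReal.ofReal_ne_top
      (Stmt13Aux.CBc_ne_top hd1)) (ENNReal.mul_ne_top ?_ (hinv_ne_top _ (by norm_num)))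
    exact ENNReal.rpow_ne_top_of_nonneg (by norm_num) (by norm_num)
  refine ⟨Stmt13Aux.CBc d + B1 + B2, ?_, ?_⟩
  · exact ENNReal.add_ne_top.mpr
      ⟨ENNReal.add_ne_top.mpr ⟨Stmt13Aux.CBc_ne_top hd1, hB1_ne_top⟩, hB2_ne_top⟩
  intro W
  have hsphere_set : (Metric.sphere (0 : Ed d) 1 : Set (Ed d)) = {x : Ed d | ‖x‖ = 1} := by
    ext x
    exact mem_sphere_zero_iff_norm
  have hSm : MeasurableSet (Metric.sphere (0 : Ed d) 1 : Set (Ed d)) :=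
    Metric.isClosed_sphere.measurableSet
  have hμS : μH[(d:ℝ)-1] (Metric.sphere (0 : Ed d) 1 : Set (Ed d)) ≤ Stmt13Aux.CBc d := by
    rw [hsphere_set]
    refine (Stmt13Aux.sphere_meas hd1).trans ?_
    rw [Stmt13Aux.CBc]
    exact le_mul_of_one_le_right (zero_le) (Stmt13Aux.one_le_ofReal_sqrt hd1)
  by_cases hW : W = 0
  · subst hW
    have hint : ∀ (ω : Ed d) (e1 e2 : ℝ),
        ENNReal.ofReal ((jap (perp ω (0 : Ed d))) ^ e1 * (jap (par ω (0 : Ed d))) ^ e2)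
          = 1 := by
      intro ω e1 e2
      have hpar0 : par ω (0 : Ed d) = 0 := by simp [par]
      have hperp0 : perp ω (0 : Ed d) = 0 := by simp [perp, par]
      rw [hpar0, hperp0]
      have hjap : jap (0 : Ed d) = 1 := by simp [jap]
      rw [hjap, Real.one_rpow, Real.one_rpow, mul_one, ENNReal.ofReal_one]
    constructor
    · calc (∫⁻ ω in Metric.sphere (0 : Ed d) 1,
            ENNReal.ofReal ((jap (perp ω (0:Ed d))) ^ (1 - 2 * β) *
              (jap (par ω (0:Ed d))) ^ ((d : ℝ) - 2 + 1/2)) ∂μH[(d : ℝ) - 1])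
          = ∫⁻ _ω in Metric.sphere (0 : Ed d) 1, 1 ∂μH[(d : ℝ) - 1] :=
            lintegral_congr (fun ω => hint ω _ _)
        _ = μH[(d:ℝ)-1] (Metric.sphere (0 : Ed d) 1 : Set (Ed d)) := setLIntegral_one _
        _ ≤ Stmt13Aux.CBc d := hμS
        _ ≤ Stmt13Aux.CBc d + B1 + B2 :=
            le_add_right (le_add_right le_rfl)
    · calc (∫⁻ ω in Metric.sphere (0 : Ed d) 1,
            ENNReal.ofReal ((jap (perp ω (0:Ed d))) ^ (1/2 : ℝ) *
              (jap (par ω (0:Ed d))) ^ ((d : ℝ) - 1 - 2 * β)) ∂μH[(d : ℝ) - 1])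
          = ∫⁻ _ω in Metric.sphere (0 : Ed d) 1, 1 ∂μH[(d : ℝ) - 1] :=
            lintegral_congr (fun ω => hint ω _ _)
        _ = μH[(d:ℝ)-1] (Metric.sphere (0 : Ed d) 1 : Set (Ed d)) := setLIntegral_one _
        _ ≤ Stmt13Aux.CBc d := hμS
        _ ≤ Stmt13Aux.CBc d + B1 + B2 :=
            le_add_right (le_add_right le_rfl)
  · have hu : ‖(‖W‖⁻¹ • W : Ed d)‖ = 1 := norm_smul_inv_norm hW
    have hnorm : ∀ x ∈ (Metric.sphere (0 : Ed d) 1 : Set (Ed d)), ‖x‖ = 1 := by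
      intro x hx
      rwa [hsphere_set] at hx
    constructor
    · -- first integral
      have hcont : Continuous fun x : Ed d =>
          Real.sqrt (1 - ((⟪x, (‖W‖⁻¹ • W : Ed d)⟫ : ℝ)) ^ 2) :=
        Real.continuous_sqrt.comp
          (continuous_const.sub ((continuous_id.inner continuous_const).pow 2))
      have hdy := Stmt13Aux.dyadic (ν := μH[(d : ℝ) - 1])
        (Metric.sphere (0 : Ed d) 1 : Set (Ed d)) hSm
        (fun x => Real.sqrt (1 - ((⟪x, (‖W‖⁻¹ • W : Ed d)⟫ : ℝ)) ^ 2)) hcont.measurable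
        (fun ω => ENNReal.ofReal ((jap (perp ω W)) ^ (1 - 2 * β) *
          (jap (par ω W)) ^ ((d : ℝ) - 2 + 1/2)))
        K1 (Stmt13Aux.CCc d) (Stmt13Aux.CCc_ne_top hd1) γ1 ((d:ℝ) - 1)
        (by rw [hγ1def]; linarith) (by rw [hγ1def]; linarith)
        ?_ ?_ ?_
      · exact hdy.trans_eq (hB1def.symm) |>.trans
          (le_add_right (le_add_left le_rfl))
      · intro t ht0 ht1
        have hset : {x | x ∈ (Metric.sphere (0 : Ed d) 1 : Set (Ed d)) ∧
            Real.sqrt (1 - ((⟪x, (‖W‖⁻¹ • W : Ed d)⟫ : ℝ)) ^ 2) ≤ t}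
            = {x : Ed d | ‖x‖ = 1 ∧
              Real.sqrt (1 - ((⟪x, (‖W‖⁻¹ • W : Ed d)⟫ : ℝ)) ^ 2) ≤ t} := by
          ext x
          simp only [mem_setOf_eq, mem_sphere_zero_iff_norm]
        rw [hset]
        exact Stmt13Aux.capC hd hu ht0 ht1
      · intro x hx
        have h := Real.sqrt_le_sqrt
          (show 1 - ((⟪x, (‖W‖⁻¹ • W : Ed d)⟫ : ℝ)) ^ 2 ≤ (1:ℝ) by nlinarith [sq_nonneg ((⟪x, (‖W‖⁻¹ • W : Ed d)⟫ : ℝ))])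
        rwa [Real.sqrt_one] at h
      · intro x hx
        exact Stmt13Aux.bound1 hd hβ hW (hnorm x hx)
    · -- second integral
      have hcont : Continuous fun x : Ed d => |(⟪x, (‖W‖⁻¹ • W : Ed d)⟫ : ℝ)| :=
        (continuous_id.inner continuous_const).abs
      have hdy := Stmt13Aux.dyadic (ν := μH[(d : ℝ) - 1])
        (Metric.sphere (0 : Ed d) 1 : Set (Ed d)) hSm
        (fun x => |(⟪x, (‖W‖⁻¹ • W : Ed d)⟫ : ℝ)|) hcont.measurable
        (fun ω => ENNReal.ofReal ((jap (perp ω W)) ^ (1/2 : ℝ) *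
          (jap (par ω W)) ^ ((d : ℝ) - 1 - 2 * β)))
        K2 (Stmt13Aux.CBc d) (Stmt13Aux.CBc_ne_top hd1) (3/4 : ℝ) 1
        (by norm_num) (by norm_num)
        ?_ ?_ ?_
      · exact hdy.trans_eq (hB2def.symm) |>.trans (le_add_left le_rfl)
      · intro t ht0 ht1
        have hset : {x | x ∈ (Metric.sphere (0 : Ed d) 1 : Set (Ed d)) ∧
            |(⟪x, (‖W‖⁻¹ • W : Ed d)⟫ : ℝ)| ≤ t}
            = {x : Ed d | ‖x‖ = 1 ∧ |(⟪x, (‖W‖⁻¹ • W : Ed d)⟫ : ℝ)| ≤ t} := by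
          ext x
          simp only [mem_setOf_eq, mem_sphere_zero_iff_norm]
        rw [hset, ENNReal.rpow_one]
        exact Stmt13Aux.capB hd hu ht0 ht1
      · intro x hx
        have h := abs_real_inner_le_norm x (‖W‖⁻¹ • W : Ed d)
        rwa [hnorm x hx, hu, one_mul] at h
      · intro x hx
        exact Stmt13Aux.bound2 hd hβ hW (hnorm x hx)
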